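/- arXiv:2511.20535 — 4 statements merged into one kernel-verified Lean document; each statement's English description precedes it below -/
import Mathlib

section
/- Assume |c| = 1. Then g(M₁) ⊆ H, and for every n ≥ 1, g(M_{2n+2}) ⊆ M_{2n+1} and g(M_{2n+1}) ⊆ M_{2n}. Consequently M := ⋃_{i≥1} M_i ⊆ Q \ K⁻. -/
variable {p : ℕ}

/-- The unique `f`-preimage map `g(u,v) = (v, (u - c)/v)`. -/
noncomputable def g [Fact p.Prime] (c : ℚ_[p]) (z : ℚ_[p] × ℚ_[p]) : ℚ_[p] × ℚ_[p] :=
  (z.2, (z.1 - c) / z.2)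

/-- The set `Q` of points whose backward iterates are all defined. -/
def QSet [Fact p.Prime] (c : ℚ_[p]) : Set (ℚ_[p] × ℚ_[p]) :=
  {z | ∀ n : ℕ, ((g c)^[n] z).2 ≠ 0}

/-- `‖(x,y)‖ = max(|x|,|y|)`. -/
noncomputable def pnorm [Fact p.Prime] (z : ℚ_[p] × ℚ_[p]) : ℝ := max ‖z.1‖ ‖z.2‖

/-- The backward filled Julia set `K⁻`. -/
def KMinus [Fact p.Prime] (c : ℚ_[p]) : Set (ℚ_[p] × ℚ_[p]) :=
  {z | z ∈ QSet c ∧ ∃ M : ℝ, ∀ n : ℕ, pnorm ((g c)^[n] z) ≤ M}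
/-- The Fibonacci sequence with `F₀ = F₁ = 1`, extended by `F₋₁ = 0` and `F₋₂ = 1`. -/
def FibZ (n : ℤ) : ℤ :=
  if 0 ≤ n then (Nat.fib (n.toNat + 1) : ℤ) else if n = -1 then 0 else if n = -2 then 1 else 0

/-- `M_{2n+1}`, for `n ≥ 0`. -/
def Modd [Fact p.Prime] (c : ℚ_[p]) (n : ℕ) : Set (ℚ_[p] × ℚ_[p]) :=
  {z ∈ QSet c | ‖z.2‖ ^ FibZ (2*(n:ℤ)-1) < ‖z.1‖ ^ FibZ (2*(n:ℤ)-2) ∧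
    ‖z.1‖ ^ FibZ (2*(n:ℤ)-1) < ‖z.2‖ ^ FibZ (2*(n:ℤ)) ∧
    ‖z.1‖ ^ FibZ (2*(n:ℤ)) ≤ ‖z.2‖ ^ FibZ (2*(n:ℤ)+1)}

/-- `M_{2n+2}`, for `n ≥ 0`. -/
def Meven [Fact p.Prime] (c : ℚ_[p]) (n : ℕ) : Set (ℚ_[p] × ℚ_[p]) :=
  {z ∈ QSet c | ‖z.1‖ ^ FibZ (2*(n:ℤ)-1) < ‖z.2‖ ^ FibZ (2*(n:ℤ)) ∧
    ‖z.2‖ ^ FibZ (2*(n:ℤ)+1) < ‖z.1‖ ^ FibZ (2*(n:ℤ)) ∧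
    ‖z.2‖ ^ FibZ (2*(n:ℤ)+2) ≤ ‖z.1‖ ^ FibZ (2*(n:ℤ)+1)}

section Aux
variable [Fact p.Prime]

lemma one_lt_pR : (1:ℝ) < (p:ℕ) := by exact_mod_cast (Fact.out : p.Prime).one_lt

lemma QSet_g {c : ℚ_[p]} {z} (h : z ∈ QSet c) : g c z ∈ QSet c := fun n => by
  have h' := h (n+1); rwa [Function.iterate_succ_apply] at h'

lemma QSet_snd_ne {c : ℚ_[p]} {z} (h : z ∈ QSet c) : z.2 ≠ 0 := by simpa using h 0

/-! ### Fibonacci facts -/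

lemma FibZ_coe (k : ℕ) : FibZ (k : ℤ) = (Nat.fib (k+1) : ℤ) := by simp [FibZ]

lemma FibZ_nonneg (m : ℤ) : 0 ≤ FibZ m := by
  unfold FibZ; split_ifs <;> simp

lemma FibZ_pos {m : ℤ} (h : 0 ≤ m) : 0 < FibZ m := by
  rw [FibZ, if_pos h]
  exact_mod_cast Nat.fib_pos.2 (Nat.succ_pos _)

lemma FibZ_add_two {m : ℤ} (h : 0 ≤ m) : FibZ m = FibZ (m-1) + FibZ (m-2) := by
  lift m to ℕ using h
  match m with
  | 0 => norm_num [FibZ]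
  | 1 => norm_num [FibZ]
  | (k+2) =>
    have e0 : ((k+2 : ℕ) : ℤ) - 1 = ((k+1 : ℕ) : ℤ) := by push_cast; ring
    have e1 : ((k+2 : ℕ) : ℤ) - 2 = ((k : ℕ) : ℤ) := by push_cast; ring
    rw [e0, e1, FibZ_coe, FibZ_coe, FibZ_coe]
    have h2 := Nat.fib_add_two (n := k+1)
    push_cast [h2]; ring

lemma cassiniNat : ∀ m : ℕ, (Nat.fib (m+1) : ℤ)^2 = (Nat.fib m : ℤ) * Nat.fib (m+2) + (-1)^m
  | 0 => by norm_num
  | (k+1) => by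
    have ih := cassiniNat k
    have h1 : (Nat.fib (k+2) : ℤ) = (Nat.fib k : ℤ) + Nat.fib (k+1) := by
      exact_mod_cast Nat.fib_add_two
    have h2 : (Nat.fib (k+3) : ℤ) = (Nat.fib (k+1) : ℤ) + Nat.fib (k+2) := by
      exact_mod_cast Nat.fib_add_two (n := k+1)
    show (Nat.fib (k+2) : ℤ)^2 = (Nat.fib (k+1) : ℤ) * Nat.fib (k+3) + (-1)^(k+1)
    linear_combination (-1:ℤ) * ih - (Nat.fib (k+1):ℤ) * h2 + (Nat.fib (k+2):ℤ) * h1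

lemma FibZ_rec1 (n : ℕ) : FibZ (2*(n:ℤ)) = FibZ (2*(n:ℤ)-1) + FibZ (2*(n:ℤ)-2) :=
  FibZ_add_two (by positivity)

lemma FibZ_rec2 (n : ℕ) : FibZ (2*(n:ℤ)+1) = FibZ (2*(n:ℤ)) + FibZ (2*(n:ℤ)-1) := by
  have h := FibZ_add_two (m := 2*(n:ℤ)+1) (by positivity)
  simpa only [show 2*(n:ℤ)+1-1 = 2*(n:ℤ) from by ring,
    show 2*(n:ℤ)+1-2 = 2*(n:ℤ)-1 from by ring] using h

lemma FibZ_rec3 (n : ℕ) : FibZ (2*(n:ℤ)+2) = FibZ (2*(n:ℤ)+1) + FibZ (2*(n:ℤ)) := by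
  have h := FibZ_add_two (m := 2*(n:ℤ)+2) (by positivity)
  simpa only [show 2*(n:ℤ)+2-1 = 2*(n:ℤ)+1 from by ring,
    show 2*(n:ℤ)+2-2 = 2*(n:ℤ) from by ring] using h

lemma FibZ_rec4 (n : ℕ) : FibZ (2*(n:ℤ)+3) = FibZ (2*(n:ℤ)+2) + FibZ (2*(n:ℤ)+1) := by
  have h := FibZ_add_two (m := 2*(n:ℤ)+3) (by positivity)
  simpa only [show 2*(n:ℤ)+3-1 = 2*(n:ℤ)+2 from by ring,
    show 2*(n:ℤ)+3-2 = 2*(n:ℤ)+1 from by ring] using h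

lemma cassE (n : ℕ) : FibZ (2*(n:ℤ))^2 = FibZ (2*(n:ℤ)-1) * FibZ (2*(n:ℤ)+1) + 1 := by
  match n with
  | 0 => norm_num [FibZ]
  | (m+1) =>
    have i0 : 2*((m+1:ℕ):ℤ) = ((2*m+2 : ℕ) : ℤ) := by push_cast; ring
    have i1 : 2*((m+1:ℕ):ℤ)-1 = ((2*m+1 : ℕ) : ℤ) := by push_cast; ring
    have i2 : 2*((m+1:ℕ):ℤ)+1 = ((2*m+3 : ℕ) : ℤ) := by push_cast; ring
    rw [i1, i2, i0, FibZ_coe, FibZ_coe, FibZ_coe]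
    have h := cassiniNat (2*m+2)
    have he : ((-1:ℤ))^(2*m+2) = 1 := Even.neg_one_pow ⟨m+1, by ring⟩
    rw [he] at h
    rw [show 2*m+2+1 = 2*m+3 from rfl, show 2*m+2+2 = 2*m+4 from rfl] at h
    rw [show 2*m+1+1 = 2*m+2 from rfl, show 2*m+3+1 = 2*m+4 from rfl]
    linarith [h]

lemma cassO (n : ℕ) : FibZ (2*(n:ℤ)-2) * FibZ (2*(n:ℤ)) = FibZ (2*(n:ℤ)-1)^2 + 1 := by
  match n with
  | 0 => norm_num [FibZ]
  | (m+1) =>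
    have i0 : 2*((m+1:ℕ):ℤ) = ((2*m+2 : ℕ) : ℤ) := by push_cast; ring
    have i1 : 2*((m+1:ℕ):ℤ)-1 = ((2*m+1 : ℕ) : ℤ) := by push_cast; ring
    have i2 : 2*((m+1:ℕ):ℤ)-2 = ((2*m : ℕ) : ℤ) := by push_cast; ring
    rw [i1, i2, i0, FibZ_coe, FibZ_coe, FibZ_coe]
    have h := cassiniNat (2*m+1)
    have he : ((-1:ℤ))^(2*m+1) = -1 := Odd.neg_one_pow ⟨m, by ring⟩
    rw [he] at h
    rw [show 2*m+1+1 = 2*m+2 from rfl, show 2*m+1+2 = 2*m+3 from rfl] at h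
    rw [show 2*m+1+1 = 2*m+2 from rfl, show 2*m+2+1 = 2*m+3 from rfl]
    linarith [h]

/-! ### Integer forms of the regions -/

def oddIneq (n : ℕ) (a b : ℤ) : Prop :=
  b * FibZ (2*(n:ℤ)-1) < a * FibZ (2*(n:ℤ)-2) ∧
    a * FibZ (2*(n:ℤ)-1) < b * FibZ (2*(n:ℤ)) ∧
    a * FibZ (2*(n:ℤ)) ≤ b * FibZ (2*(n:ℤ)+1)

def evenIneq (n : ℕ) (a b : ℤ) : Prop :=
  a * FibZ (2*(n:ℤ)-1) < b * FibZ (2*(n:ℤ)) ∧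
    b * FibZ (2*(n:ℤ)+1) < a * FibZ (2*(n:ℤ)) ∧
    b * FibZ (2*(n:ℤ)+2) ≤ a * FibZ (2*(n:ℤ)+1)

lemma odd_pos {n : ℕ} {a b : ℤ} (h : oddIneq n a b) : 0 < a ∧ 0 < b := by
  obtain ⟨h1, h2, h3⟩ := h
  have hf2 : 0 < FibZ (2*(n:ℤ)) := FibZ_pos (by positivity)
  have hf1 : 0 ≤ FibZ (2*(n:ℤ)-1) := FibZ_nonneg _
  have p1 := mul_lt_mul_of_pos_right h1 hf2
  have p2 := mul_le_mul_of_nonneg_right h2.le hf1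
  have key : a * (FibZ (2*(n:ℤ)-2) * FibZ (2*(n:ℤ))) = a * (FibZ (2*(n:ℤ)-1)^2 + 1) := by
    rw [cassO n]
  have ha : 0 < a := by nlinarith [p1, p2, key]
  refine ⟨ha, ?_⟩
  have hb2 : 0 < b * FibZ (2*(n:ℤ)) :=
    lt_of_le_of_lt (mul_nonneg ha.le hf1) h2
  nlinarith [hb2, hf2]

lemma even_pos {n : ℕ} {a b : ℤ} (h : evenIneq n a b) : 0 < a ∧ 0 < b := by
  obtain ⟨h1, h2, h3⟩ := h
  have hf2 : 0 < FibZ (2*(n:ℤ)) := FibZ_pos (by positivity)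
  have hf3 : 0 < FibZ (2*(n:ℤ)+1) := FibZ_pos (by positivity)
  have hf1 : 0 ≤ FibZ (2*(n:ℤ)-1) := FibZ_nonneg _
  have p1 := mul_le_mul_of_nonneg_right h1.le hf3.le
  have p2 := mul_lt_mul_of_pos_right h2 hf2
  have key : a * (FibZ (2*(n:ℤ)))^2 = a * (FibZ (2*(n:ℤ)-1) * FibZ (2*(n:ℤ)+1) + 1) := by
    rw [cassE n]
  have ha : 0 < a := by nlinarith [p1, p2, key]
  refine ⟨ha, ?_⟩
  have hb2 : 0 < b * FibZ (2*(n:ℤ)) :=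
    lt_of_le_of_lt (mul_nonneg ha.le hf1) h1
  nlinarith [hb2, hf2]

lemma even_step {n : ℕ} {a b : ℤ} (h : evenIneq n a b) : oddIneq n b (a - b) := by
  obtain ⟨h1, h2, h3⟩ := h
  unfold oddIneq
  simp only [FibZ_rec3 n, FibZ_rec2 n, FibZ_rec1 n] at h1 h2 h3 ⊢
  refine ⟨by nlinarith [h1], by nlinarith [h2], by nlinarith [h3]⟩

lemma odd_step {n : ℕ} {a b : ℤ} (h : oddIneq (n+1) a b) : evenIneq n b (a - b) := by
  obtain ⟨h1, h2, h3⟩ := h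
  have e : ((n+1:ℕ):ℤ) = (n:ℤ)+1 := by push_cast; ring
  rw [e] at h1 h2 h3
  rw [show 2*((n:ℤ)+1)-1 = 2*(n:ℤ)+1 from by ring, show 2*((n:ℤ)+1)-2 = 2*(n:ℤ) from by ring]
    at h1
  rw [show 2*((n:ℤ)+1)-1 = 2*(n:ℤ)+1 from by ring, show 2*((n:ℤ)+1) = 2*(n:ℤ)+2 from by ring]
    at h2
  rw [show 2*((n:ℤ)+1)+1 = 2*(n:ℤ)+3 from by ring, show 2*((n:ℤ)+1) = 2*(n:ℤ)+2 from by ring]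
    at h3
  unfold evenIneq
  simp only [FibZ_rec4 n, FibZ_rec3 n, FibZ_rec2 n, FibZ_rec1 n] at h1 h2 h3 ⊢
  refine ⟨by nlinarith [h1], by nlinarith [h2], by nlinarith [h3]⟩

/-! ### Bridge between norms and integers -/

lemma mem_Modd_iff {c : ℚ_[p]} {n : ℕ} {z : ℚ_[p] × ℚ_[p]} (hz : z ∈ QSet c) {A B : ℤ}
    (hx : ‖z.1‖ = (p:ℝ)^A) (hy : ‖z.2‖ = (p:ℝ)^B) :
    z ∈ Modd c n ↔ oddIneq n A B := by
  have hp : (1:ℝ) < (p:ℕ) := one_lt_pR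
  simp only [Modd, Set.mem_setOf_eq, hz, true_and, hx, hy, ← zpow_mul,
    zpow_lt_zpow_iff_right₀ hp, zpow_le_zpow_iff_right₀ hp, oddIneq]

lemma mem_Meven_iff {c : ℚ_[p]} {n : ℕ} {z : ℚ_[p] × ℚ_[p]} (hz : z ∈ QSet c) {A B : ℤ}
    (hx : ‖z.1‖ = (p:ℝ)^A) (hy : ‖z.2‖ = (p:ℝ)^B) :
    z ∈ Meven c n ↔ evenIneq n A B := by
  have hp : (1:ℝ) < (p:ℕ) := one_lt_pR
  simp only [Meven, Set.mem_setOf_eq, hz, true_and, hx, hy, ← zpow_mul,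
    zpow_lt_zpow_iff_right₀ hp, zpow_le_zpow_iff_right₀ hp, evenIneq]

/-! ### Norm facts -/

lemma norm_sub_c {c x : ℚ_[p]} (hc : ‖c‖ = 1) (hx : 1 < ‖x‖) : ‖x - c‖ = ‖x‖ := by
  rw [sub_eq_add_neg, Padic.add_eq_max_of_ne (by rw [norm_neg, hc]; exact (ne_of_gt hx)),
    norm_neg, hc, max_eq_left hx.le]

lemma norm_sub_le_one {c y : ℚ_[p]} (hc : ‖c‖ = 1) (hy : ‖y‖ ≤ 1) : ‖y - c‖ ≤ 1 := by
  calc ‖y - c‖ ≤ max ‖y‖ ‖-c‖ := by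
        rw [sub_eq_add_neg]; exact Padic.nonarchimedean _ _
    _ ≤ 1 := by rw [norm_neg, hc]; exact max_le hy le_rfl

/-! ### The three mapping lemmas -/

lemma step_even {c : ℚ_[p]} (hc : ‖c‖ = 1) (n : ℕ) : g c '' Meven c n ⊆ Modd c n := by
  have hp : (1:ℝ) < (p:ℕ) := one_lt_pR
  rintro _ ⟨z, hz, rfl⟩
  obtain ⟨hQ, h1, h2, h3⟩ := hz
  have hy0 : z.2 ≠ 0 := QSet_snd_ne hQ
  have hx0 : z.1 ≠ 0 := by
    intro h0
    rw [h0, norm_zero, zero_zpow _ (ne_of_gt (FibZ_pos (by positivity)))] at h2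
    exact absurd h2 (not_lt.mpr (zpow_nonneg (norm_nonneg _) _))
  have hxa : ‖z.1‖ = (p:ℝ)^(-z.1.valuation) := Padic.norm_eq_zpow_neg_valuation hx0
  have hyb : ‖z.2‖ = (p:ℝ)^(-z.2.valuation) := Padic.norm_eq_zpow_neg_valuation hy0
  have hE : evenIneq n (-z.1.valuation) (-z.2.valuation) :=
    (mem_Meven_iff hQ hxa hyb).mp ⟨hQ, h1, h2, h3⟩
  obtain ⟨ha, hb⟩ := even_pos hE
  have hx1 : 1 < ‖z.1‖ := by
    rw [hxa, show (1:ℝ) = (p:ℝ)^(0:ℤ) from (zpow_zero _).symm]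
    exact (zpow_lt_zpow_iff_right₀ hp).mpr ha
  have hgQ : g c z ∈ QSet c := QSet_g hQ
  have hgx : ‖(g c z).1‖ = (p:ℝ)^(-z.2.valuation) := hyb
  have hgy : ‖(g c z).2‖ = (p:ℝ)^((-z.1.valuation) - (-z.2.valuation)) := by
    show ‖(z.1 - c)/z.2‖ = _
    rw [norm_div, norm_sub_c hc hx1, hxa, hyb, ← zpow_sub₀ (by positivity)]
  exact (mem_Modd_iff hgQ hgx hgy).mpr (even_step hE)

lemma step_odd {c : ℚ_[p]} (hc : ‖c‖ = 1) (n : ℕ) :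
    g c '' Modd c (n+1) ⊆ Meven c n := by
  have hp : (1:ℝ) < (p:ℕ) := one_lt_pR
  rintro _ ⟨z, hz, rfl⟩
  obtain ⟨hQ, h1, h2, h3⟩ := hz
  have hy0 : z.2 ≠ 0 := QSet_snd_ne hQ
  have hx0 : z.1 ≠ 0 := by
    intro h0
    have hidx : (0:ℤ) ≤ 2*((n+1:ℕ):ℤ)-2 := by push_cast; omega
    rw [h0, norm_zero, zero_zpow _ (ne_of_gt (FibZ_pos hidx))] at h1
    exact absurd h1 (not_lt.mpr (zpow_nonneg (norm_nonneg _) _))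
  have hxa : ‖z.1‖ = (p:ℝ)^(-z.1.valuation) := Padic.norm_eq_zpow_neg_valuation hx0
  have hyb : ‖z.2‖ = (p:ℝ)^(-z.2.valuation) := Padic.norm_eq_zpow_neg_valuation hy0
  have hO : oddIneq (n+1) (-z.1.valuation) (-z.2.valuation) :=
    (mem_Modd_iff hQ hxa hyb).mp ⟨hQ, h1, h2, h3⟩
  obtain ⟨ha, hb⟩ := odd_pos hO
  have hx1 : 1 < ‖z.1‖ := by
    rw [hxa, show (1:ℝ) = (p:ℝ)^(0:ℤ) from (zpow_zero _).symm]
    exact (zpow_lt_zpow_iff_right₀ hp).mpr ha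
  have hgQ : g c z ∈ QSet c := QSet_g hQ
  have hgx : ‖(g c z).1‖ = (p:ℝ)^(-z.2.valuation) := hyb
  have hgy : ‖(g c z).2‖ = (p:ℝ)^((-z.1.valuation) - (-z.2.valuation)) := by
    show ‖(z.1 - c)/z.2‖ = _
    rw [norm_div, norm_sub_c hc hx1, hxa, hyb, ← zpow_sub₀ (by positivity)]
  exact (mem_Meven_iff hgQ hgx hgy).mpr (odd_step hO)

lemma step_zero {c : ℚ_[p]} (hc : ‖c‖ = 1) :
    g c '' Modd c 0 ⊆ {z ∈ QSet c | 1 < ‖z.1‖ ∧ ‖z.2‖ ≤ 1} := by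
  rintro _ ⟨z, hz, rfl⟩
  obtain ⟨hQ, h1, h2, h3⟩ := hz
  norm_num [FibZ] at h1 h2 h3
  refine ⟨QSet_g hQ, h2, ?_⟩
  show ‖(z.1 - c)/z.2‖ ≤ 1
  rw [norm_div, norm_sub_c hc h1, div_le_one (lt_trans one_pos h2)]
  exact h3

/-! ### Escape to infinity from `H` -/

lemma double_step {c : ℚ_[p]} (hc : ‖c‖ = 1) {z : ℚ_[p] × ℚ_[p]} (hQ : z ∈ QSet c)
    (hx : 1 < ‖z.1‖) (hy : ‖z.2‖ ≤ 1) :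
    g c (g c z) ∈ QSet c ∧ ‖z.1‖ ≤ ‖(g c (g c z)).1‖ ∧ 1 < ‖(g c (g c z)).1‖ ∧
      ‖(g c (g c z)).2‖ ≤ ‖(g c (g c z)).1‖⁻¹ ∧
      (‖z.2‖ ≤ ‖z.1‖⁻¹ → ‖z.1‖^2 ≤ ‖(g c (g c z)).1‖) := by
  have hy0 : z.2 ≠ 0 := QSet_snd_ne hQ
  have hypos : 0 < ‖z.2‖ := norm_pos_iff.mpr hy0
  have hw1 : ‖(g c (g c z)).1‖ = ‖z.1‖ / ‖z.2‖ := by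
    show ‖(z.1 - c)/z.2‖ = _
    rw [norm_div, norm_sub_c hc hx]
  have hle : ‖z.1‖ ≤ ‖(g c (g c z)).1‖ := by
    rw [hw1, le_div_iff₀ hypos]
    exact mul_le_of_le_one_right (by linarith) hy
  have hw1lt : 1 < ‖(g c (g c z)).1‖ := lt_of_lt_of_le hx hle
  have hw1pos : 0 < ‖(g c (g c z)).1‖ := lt_trans one_pos hw1lt
  have hw2 : ‖(g c (g c z)).2‖ = ‖z.2 - c‖ / ‖(g c (g c z)).1‖ := by
    have e : (g c (g c z)).2 = (z.2 - c) / (g c z).2 := rfl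
    rw [e, norm_div]
    rfl
  refine ⟨QSet_g (QSet_g hQ), hle, hw1lt, ?_, ?_⟩
  · rw [hw2, ← one_div, div_le_div_iff₀ hw1pos hw1pos]
    nlinarith [norm_sub_le_one hc hy, hw1pos]
  · intro hyinv
    have hxne : ‖z.1‖ ≠ 0 := by positivity
    rw [hw1, le_div_iff₀ hypos]
    calc ‖z.1‖^2 * ‖z.2‖ ≤ ‖z.1‖^2 * ‖z.1‖⁻¹ :=
          mul_le_mul_of_nonneg_left hyinv (by positivity)
      _ = ‖z.1‖ := by rw [sq, mul_assoc, mul_inv_cancel₀ hxne, mul_one]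

lemma escape_aux {c : ℚ_[p]} (hc : ‖c‖ = 1) {z : ℚ_[p] × ℚ_[p]} (hQ : z ∈ QSet c)
    (hx : 1 < ‖z.1‖) (hy : ‖z.2‖ ≤ 1) : ∀ k : ℕ,
    ((g c)^[2*k+2] z) ∈ QSet c ∧ 1 < ‖((g c)^[2*k+2] z).1‖ ∧
      ‖((g c)^[2*k+2] z).2‖ ≤ ‖((g c)^[2*k+2] z).1‖⁻¹ ∧
      ‖z.1‖^(k+1) ≤ ‖((g c)^[2*k+2] z).1‖ := by
  intro k
  induction k with
  | zero =>
    have h := double_step hc hQ hx hy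
    have e : (g c)^[2*0+2] z = g c (g c z) := by
      norm_num [show (2:ℕ) = 0+1+1 from rfl, Function.iterate_succ_apply']
    rw [e]
    exact ⟨h.1, h.2.2.1, h.2.2.2.1, by simpa using h.2.1⟩
  | succ k ih =>
    obtain ⟨iQ, ix, iy, ib⟩ := ih
    have hinv : ‖((g c)^[2*k+2] z).1‖⁻¹ ≤ 1 := by
      rw [inv_le_one_iff₀]
      right; exact ix.le
    have iy1 : ‖((g c)^[2*k+2] z).2‖ ≤ 1 := le_trans iy hinv
    have h := double_step hc iQ ix iy1
    have e : (g c)^[2*(k+1)+2] z = g c (g c ((g c)^[2*k+2] z)) := by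
      rw [show 2*(k+1)+2 = (2*k+2)+1+1 from by ring, Function.iterate_succ_apply',
        Function.iterate_succ_apply']
    rw [e]
    refine ⟨h.1, h.2.2.1, h.2.2.2.1, ?_⟩
    have h2 := h.2.2.2.2 iy
    calc ‖z.1‖^(k+1+1) ≤ (‖z.1‖^(k+1))^2 := by
          rw [← pow_mul]
          exact pow_le_pow_right₀ hx.le (by omega)
      _ ≤ ‖((g c)^[2*k+2] z).1‖^2 := pow_le_pow_left₀ (by positivity) ib 2
      _ ≤ _ := h2

lemma inH_not_bdd {c : ℚ_[p]} (hc : ‖c‖ = 1) {z : ℚ_[p] × ℚ_[p]} (hQ : z ∈ QSet c)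
    (hx : 1 < ‖z.1‖) (hy : ‖z.2‖ ≤ 1) :
    ¬ ∃ M : ℝ, ∀ k : ℕ, pnorm ((g c)^[k] z) ≤ M := by
  rintro ⟨M, hM⟩
  obtain ⟨k, hk⟩ := pow_unbounded_of_one_lt M hx
  obtain ⟨-, -, -, hb⟩ := escape_aux hc hQ hx hy k
  have h1 : ‖z.1‖^k ≤ ‖z.1‖^(k+1) := pow_le_pow_right₀ hx.le (by omega)
  have h2 := hM (2*k+2)
  have h3 : ‖((g c)^[2*k+2] z).1‖ ≤ pnorm ((g c)^[2*k+2] z) := le_max_left _ _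
  linarith

/-! ### Reaching `H` -/

lemma reach_odd {c : ℚ_[p]} (hc : ‖c‖ = 1) : ∀ n : ℕ, ∀ z ∈ Modd c n,
    (g c)^[2*n+1] z ∈ {w : ℚ_[p] × ℚ_[p] | w ∈ QSet c ∧ 1 < ‖w.1‖ ∧ ‖w.2‖ ≤ 1} := by
  intro n
  induction n with
  | zero =>
    intro z hz
    have e : (g c)^[2*0+1] z = g c z := by norm_num
    rw [e]
    exact step_zero hc ⟨z, hz, rfl⟩
  | succ n ih =>
    intro z hz
    have h1 : g c z ∈ Meven c n := step_odd hc n ⟨z, hz, rfl⟩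
    have h2 : g c (g c z) ∈ Modd c n := step_even hc n ⟨g c z, h1, rfl⟩
    have h3 := ih _ h2
    have e : (g c)^[2*(n+1)+1] z = (g c)^[2*n+1] (g c (g c z)) := by
      rw [show 2*(n+1)+1 = (2*n+1)+2 from by ring, Function.iterate_add_apply]
      rfl
    rw [e]
    exact h3

lemma reach_even {c : ℚ_[p]} (hc : ‖c‖ = 1) (n : ℕ) {z : ℚ_[p] × ℚ_[p]} (hz : z ∈ Meven c n) :
    (g c)^[2*n+2] z ∈ {w : ℚ_[p] × ℚ_[p] | w ∈ QSet c ∧ 1 < ‖w.1‖ ∧ ‖w.2‖ ≤ 1} := by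
  have h1 : g c z ∈ Modd c n := step_even hc n ⟨z, hz, rfl⟩
  have h3 := reach_odd hc n _ h1
  have e : (g c)^[2*n+2] z = (g c)^[2*n+1] (g c z) := by
    rw [show 2*n+2 = (2*n+1)+1 from by ring, Function.iterate_succ_apply]
  rw [e]
  exact h3

end Aux

/-- If `|c| = 1` then `g(M₁) ⊆ H`, and for `n ≥ 1`, `g(M_{2n+2}) ⊆ M_{2n+1}` and
`g(M_{2n+1}) ⊆ M_{2n}`; consequently `M = ⋃_{i ≥ 1} M_i ⊆ Q \ K⁻`. -/
theorem stmt15 [Fact p.Prime] (hodd : Odd p) (c : ℚ_[p]) (hc : ‖c‖ = 1)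
    (H : Set (ℚ_[p] × ℚ_[p]))
    (hH : H = {z ∈ QSet c | 1 < ‖z.1‖ ∧ ‖z.2‖ ≤ 1}) :
    g c '' Modd c 0 ⊆ H ∧
      (∀ n : ℕ, 1 ≤ n → g c '' Meven c n ⊆ Modd c n) ∧
      (∀ n : ℕ, 1 ≤ n → g c '' Modd c n ⊆ Meven c (n - 1)) ∧
      ((⋃ n : ℕ, Modd c n) ∪ (⋃ n : ℕ, Meven c n)) ⊆ QSet c \ KMinus c := by
  refine ⟨by rw [hH]; exact step_zero hc, fun n _ => step_even hc n, ?_, ?_⟩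
  · intro n hn
    obtain ⟨m, rfl⟩ : ∃ m, n = m+1 := ⟨n-1, by omega⟩
    simpa using step_odd hc m
  · intro z hz
    have hzQ : z ∈ QSet c := by
      rcases hz with h | h
      · obtain ⟨n, hn⟩ := Set.mem_iUnion.mp h; exact hn.1
      · obtain ⟨n, hn⟩ := Set.mem_iUnion.mp h; exact hn.1
    refine ⟨hzQ, ?_⟩
    intro hK
    obtain ⟨-, M, hM⟩ := hK
    have hreach : ∃ m : ℕ,
        (g c)^[m] z ∈ {w : ℚ_[p] × ℚ_[p] | w ∈ QSet c ∧ 1 < ‖w.1‖ ∧ ‖w.2‖ ≤ 1} := by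
      rcases hz with h | h
      · obtain ⟨n, hn⟩ := Set.mem_iUnion.mp h
        exact ⟨2*n+1, reach_odd hc n z hn⟩
      · obtain ⟨n, hn⟩ := Set.mem_iUnion.mp h
        exact ⟨2*n+2, reach_even hc n hn⟩
    obtain ⟨m, hwQ, hwx, hwy⟩ := hreach
    refine inH_not_bdd hc hwQ hwx hwy ⟨M, fun k => ?_⟩
    rw [← Function.iterate_add_apply]
    exact hM (k+m)
end

section
/- Assume |c| = p^d with d ≥ 1 an integer, and let (x,y) ∈ G with |x| = p^a and |y| = p^b, where a, b are integers with a ≤ d < b. Write (x_{-n}, y_{-n}) = gⁿ(x,y). Then for every i ≥ 0: |x_{-2i-1}| ≥ p^{2^i b - (2^i - 1)d} and |y_{-2i-1}| ≤ p^{2^i d - 2^i b}, and |x_{-2i-2}| ≤ p^{2^i d - 2^i b} and |y_{-2i-2}| ≥ p^{2^{i+1} b - (2^{i+1} - 1)d}. In particular ‖gⁿ(x,y)‖ ≥ p^{2^{⌊n/2⌋}(b - d) + d} for all n ≥ 1, so ‖gⁿ(x,y)‖ → +∞ as n → +∞. -/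
variable {p : ℕ}

/-- If `|c| = p^d` (`d ≥ 1`) and `(x,y) ∈ G` with `|x| = p^a`, `|y| = p^b`,
`a ≤ d < b`, then the stated bounds on the backward iterates hold, and
`‖gⁿ(x,y)‖ → +∞`. -/
theorem stmt17 [Fact p.Prime] (hodd : Odd p) (c : ℚ_[p]) (d a b : ℤ)
    (hd : 1 ≤ d) (hc : ‖c‖ = (p : ℝ) ^ d)
    (z : ℚ_[p] × ℚ_[p])
    (hzG : z ∈ {w ∈ QSet c | ‖w.1‖ ≤ ‖c‖ ∧ ‖c‖ < ‖w.2‖})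
    (hx : ‖z.1‖ = (p : ℝ) ^ a) (hy : ‖z.2‖ = (p : ℝ) ^ b)
    (had : a ≤ d) (hdb : d < b) :
    (∀ i : ℕ,
      (p : ℝ) ^ (2 ^ i * b - (2 ^ i - 1) * d) ≤ ‖((g c)^[2*i+1] z).1‖ ∧
      ‖((g c)^[2*i+1] z).2‖ ≤ (p : ℝ) ^ (2 ^ i * d - 2 ^ i * b) ∧
      ‖((g c)^[2*i+2] z).1‖ ≤ (p : ℝ) ^ (2 ^ i * d - 2 ^ i * b) ∧
      (p : ℝ) ^ (2 ^ (i+1) * b - (2 ^ (i+1) - 1) * d) ≤ ‖((g c)^[2*i+2] z).2‖) ∧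
    (∀ n : ℕ, 1 ≤ n → (p : ℝ) ^ (2 ^ (n / 2) * (b - d) + d) ≤ pnorm ((g c)^[n] z)) ∧
    Filter.Tendsto (fun n : ℕ => pnorm ((g c)^[n] z)) Filter.atTop Filter.atTop := by
  obtain ⟨hzQ, hzx, hzy⟩ := hzG
  have hp1 : (1:ℝ) < p := by exact_mod_cast (Fact.out : p.Prime).one_lt
  have hp0 : (0:ℝ) < p := lt_trans one_pos hp1
  have hpne : (p:ℝ) ≠ 0 := ne_of_gt hp0
  have hmono : ∀ {m n : ℤ}, m ≤ n → (p:ℝ)^m ≤ (p:ℝ)^n :=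
    fun h => zpow_le_zpow_right₀ hp1.le h
  have hQ : ∀ n : ℕ, ((g c)^[n] z).2 ≠ 0 := hzQ
  have hnorm2 : ∀ n : ℕ, 0 < ‖((g c)^[n] z).2‖ := fun n => norm_pos_iff.mpr (hQ n)
  have hstep1 : ∀ n : ℕ, ((g c)^[n+1] z).1 = ((g c)^[n] z).2 := fun n => by
    rw [Function.iterate_succ_apply']; rfl
  have hstep2 : ∀ n : ℕ, ((g c)^[n+1] z).2 = (((g c)^[n] z).1 - c) / ((g c)^[n] z).2 :=
    fun n => by rw [Function.iterate_succ_apply']; rfl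
  have hsub_le : ∀ u : ℚ_[p], ‖u - c‖ ≤ max ‖u‖ ‖c‖ := fun u => by
    simpa [sub_eq_add_neg] using Padic.nonarchimedean u (-c)
  have hsub_eq : ∀ u : ℚ_[p], ‖c‖ < ‖u‖ → ‖u - c‖ = ‖u‖ := fun u h => by
    rw [sub_eq_add_neg, Padic.add_eq_max_of_ne (by rw [norm_neg]; exact ne_of_gt h),
      norm_neg]
    exact max_eq_left h.le
  set β : ℕ → ℤ := fun i => 2^i * b - (2^i - 1) * d with hβ
  have hβd : ∀ i, d < β i := by
    intro i
    have h2 : (0:ℤ) < 2^i := pow_pos two_pos i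
    have : (1:ℤ) ≤ b - d := by omega
    simp only [hβ]
    nlinarith
  have hβsucc : ∀ i, β (i+1) = 2 * β i - d := by
    intro i; simp only [hβ]; ring
  -- the two transfer steps
  have oddToEven : ∀ i : ℕ,
      ((p:ℝ)^(β i) ≤ ‖((g c)^[2*i+1] z).1‖ ∧ ‖((g c)^[2*i+1] z).2‖ ≤ (p:ℝ)^(d - β i)) →
      ‖((g c)^[2*i+2] z).1‖ ≤ (p:ℝ)^(d - β i) ∧ (p:ℝ)^(β (i+1)) ≤ ‖((g c)^[2*i+2] z).2‖ := by
    intro i ⟨ih1, ih2⟩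
    constructor
    · rw [show 2*i+2 = (2*i+1)+1 by ring, hstep1 (2*i+1)]; exact ih2
    · rw [show 2*i+2 = (2*i+1)+1 by ring, hstep2 (2*i+1), norm_div]
      have hcx : ‖c‖ < ‖((g c)^[2*i+1] z).1‖ :=
        lt_of_lt_of_le (by rw [hc]; exact lt_of_lt_of_le (zpow_lt_zpow_right₀ hp1 (hβd i)) ih1) le_rfl
      rw [hsub_eq _ hcx]
      have := div_le_div₀ (norm_nonneg ((g c)^[2*i+1] z).1) ih1 (hnorm2 (2*i+1)) ih2
      calc (p:ℝ)^(β (i+1)) = (p:ℝ)^(β i) / (p:ℝ)^(d - β i) := by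
            rw [← zpow_sub₀ hpne]; congr 1; rw [hβsucc i]; ring
        _ ≤ _ := this
  have evenToOdd : ∀ i : ℕ,
      (‖((g c)^[2*i+2] z).1‖ ≤ (p:ℝ)^(d - β i) ∧ (p:ℝ)^(β (i+1)) ≤ ‖((g c)^[2*i+2] z).2‖) →
      (p:ℝ)^(β (i+1)) ≤ ‖((g c)^[2*(i+1)+1] z).1‖ ∧
        ‖((g c)^[2*(i+1)+1] z).2‖ ≤ (p:ℝ)^(d - β (i+1)) := by
    intro i ⟨ih1, ih2⟩
    constructor
    · rw [show 2*(i+1)+1 = (2*i+2)+1 by ring, hstep1 (2*i+2)]; exact ih2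
    · rw [show 2*(i+1)+1 = (2*i+2)+1 by ring, hstep2 (2*i+2), norm_div]
      have h1 : ‖((g c)^[2*i+2] z).1 - c‖ ≤ (p:ℝ)^d := by
        refine (hsub_le _).trans (max_le (ih1.trans (hmono ?_)) (le_of_eq hc))
        have := hβd i; omega
      calc ‖((g c)^[2*i+2] z).1 - c‖ / ‖((g c)^[2*i+2] z).2‖
          ≤ (p:ℝ)^d / (p:ℝ)^(β (i+1)) :=
            div_le_div₀ (zpow_pos hp0 d).le h1 (zpow_pos hp0 (β (i+1))) ih2
        _ = (p:ℝ)^(d - β (i+1)) := (zpow_sub₀ hpne _ _).symm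
  have key : ∀ i : ℕ,
      ((p:ℝ)^(β i) ≤ ‖((g c)^[2*i+1] z).1‖ ∧ ‖((g c)^[2*i+1] z).2‖ ≤ (p:ℝ)^(d - β i)) := by
    intro i
    induction i with
    | zero =>
      constructor
      · rw [show 2*0+1 = 0+1 by ring, hstep1 0]
        simp only [Function.iterate_zero_apply, hy]
        exact hmono (by simp [hβ])
      · rw [show 2*0+1 = 0+1 by ring, hstep2 0, norm_div]
        simp only [Function.iterate_zero_apply]
        have h1 : ‖z.1 - c‖ ≤ (p:ℝ)^d :=
          (hsub_le z.1).trans (max_le (hzx.trans (le_of_eq hc)) (le_of_eq hc))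
        calc ‖z.1 - c‖ / ‖z.2‖ ≤ (p:ℝ)^d / (p:ℝ)^b := by
              refine div_le_div₀ (zpow_pos hp0 d).le h1 (zpow_pos hp0 b) (le_of_eq hy.symm)
          _ = (p:ℝ)^(d - b) := (zpow_sub₀ hpne _ _).symm
          _ ≤ (p:ℝ)^(d - β 0) := hmono (by simp [hβ])
    | succ i ih => exact evenToOdd i (oddToEven i ih)
  have keyEven : ∀ i : ℕ,
      ‖((g c)^[2*i+2] z).1‖ ≤ (p:ℝ)^(d - β i) ∧ (p:ℝ)^(β (i+1)) ≤ ‖((g c)^[2*i+2] z).2‖ :=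
    fun i => oddToEven i (key i)
  have hdβ : ∀ i : ℕ, d - β i = 2^i * d - 2^i * b := by intro i; simp only [hβ]; ring
  have part1 : ∀ i : ℕ,
      (p : ℝ) ^ (2 ^ i * b - (2 ^ i - 1) * d) ≤ ‖((g c)^[2*i+1] z).1‖ ∧
      ‖((g c)^[2*i+1] z).2‖ ≤ (p : ℝ) ^ (2 ^ i * d - 2 ^ i * b) ∧
      ‖((g c)^[2*i+2] z).1‖ ≤ (p : ℝ) ^ (2 ^ i * d - 2 ^ i * b) ∧
      (p : ℝ) ^ (2 ^ (i+1) * b - (2 ^ (i+1) - 1) * d) ≤ ‖((g c)^[2*i+2] z).2‖ := by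
    intro i
    refine ⟨(key i).1, ?_, ?_, (keyEven i).2⟩
    · rw [← hdβ i]; exact (key i).2
    · rw [← hdβ i]; exact (keyEven i).1
  have part2 : ∀ n : ℕ, 1 ≤ n → (p:ℝ)^(β (n/2)) ≤ pnorm ((g c)^[n] z) := by
    intro n hn
    rcases Nat.even_or_odd' n with ⟨k, hk | hk⟩
    · -- n = 2k, k ≥ 1
      obtain ⟨i, rfl⟩ : ∃ i, k = i + 1 := ⟨k - 1, by omega⟩
      have h2 : n / 2 = i + 1 := by omega
      have hn2 : n = 2*i+2 := by omega
      rw [h2, hn2]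
      exact le_trans (keyEven i).2 (le_max_right _ _)
    · have h2 : n / 2 = k := by omega
      rw [h2, hk]
      exact le_trans (key k).1 (le_max_left _ _)
  have part2' : ∀ n : ℕ, 1 ≤ n →
      (p : ℝ) ^ (2 ^ (n / 2) * (b - d) + d) ≤ pnorm ((g c)^[n] z) := by
    intro n hn
    have : (2:ℤ) ^ (n / 2) * (b - d) + d = β (n/2) := by simp only [hβ]; ring
    rw [this]; exact part2 n hn
  refine ⟨part1, part2', ?_⟩
  have hzt : Filter.Tendsto (fun m : ℤ => (p:ℝ)^m) Filter.atTop Filter.atTop := by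
    rw [Filter.tendsto_atTop_atTop]
    intro B
    obtain ⟨k, hk⟩ := pow_unbounded_of_one_lt B hp1
    refine ⟨(k:ℤ), fun m hm => le_trans ?_ (hmono hm)⟩
    rw [zpow_natCast]; exact hk.le
  have hβt : Filter.Tendsto (fun n : ℕ => β (n/2)) Filter.atTop Filter.atTop := by
    rw [Filter.tendsto_atTop_atTop]
    intro M
    refine ⟨2 * (M - d).toNat, fun n hn => ?_⟩
    have h1 : (M - d).toNat ≤ n / 2 := by omega
    have h2 : ((n/2 : ℕ):ℤ) ≤ 2^(n/2) := by exact_mod_cast (Nat.lt_two_pow_self (n := n/2)).le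
    have h3 : M - d ≤ ((M - d).toNat : ℤ) := Int.self_le_toNat _
    have h4 : ((M - d).toNat : ℤ) ≤ ((n/2 : ℕ):ℤ) := by exact_mod_cast h1
    have hbd1 : (1:ℤ) ≤ b - d := by omega
    have h5 : (2:ℤ)^(n/2) ≤ 2^(n/2) * (b - d) :=
      le_mul_of_one_le_right (pow_nonneg (by norm_num) _) hbd1
    simp only [hβ]
    nlinarith
  have hcomp : Filter.Tendsto (fun n : ℕ => (p:ℝ)^(β (n/2))) Filter.atTop Filter.atTop :=
    hzt.comp hβt
  refine Filter.tendsto_atTop_mono' _ ?_ hcomp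
  filter_upwards [Filter.eventually_ge_atTop 1] with n hn
  exact part2 n hn
end

section
/- Let c = p and (x,y) = (p + 2p³, 2p). Then (x,y) ∈ Q (i.e., all backward iterates gⁿ(x,y) are defined), |x| = |y| = |c| = p^{-1}, and writing (x_{-n}, y_{-n}) = gⁿ(x,y), for every n ≥ 1 one has (|x_{-2n-1}|, |y_{-2n-1}|) = (p^{2ⁿ - 1}, p^{-2ⁿ}) and (|x_{-2n-2}|, |y_{-2n-2}|) = (p^{-2ⁿ}, p^{2^{n+1} - 1}). In particular ‖gⁿ(x,y)‖ → +∞ as n → +∞, so (x,y) ∈ R \ K⁻. -/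
variable {p : ℕ}

private lemma norm_sub_max [Fact p.Prime] {a b : ℚ_[p]} {s t : ℤ}
    (ha : ‖a‖ = (p:ℝ)^s) (hb : ‖b‖ = (p:ℝ)^t) (h : t < s) : ‖a - b‖ = (p:ℝ)^s := by
  have hp1 : (1:ℝ) < p := by exact_mod_cast (Fact.out : p.Prime).one_lt
  have hne : ‖a‖ ≠ ‖-b‖ := by
    rw [norm_neg, ha, hb]
    exact (zpow_right_strictMono₀ hp1).injective.ne h.ne'
  rw [sub_eq_add_neg, Padic.add_eq_max_of_ne hne, norm_neg, ha, hb,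
    max_eq_left (zpow_le_zpow_right₀ hp1.le h.le)]

/-- One backward step on norms. -/
private lemma gstep [Fact p.Prime] {c : ℚ_[p]} (hc : ‖c‖ = (p:ℝ)^(-1:ℤ))
    {w : ℚ_[p] × ℚ_[p]} {s t : ℤ} (hs : ‖w.1‖ = (p:ℝ)^s) (ht : ‖w.2‖ = (p:ℝ)^t)
    (hs1 : s ≠ -1) :
    ‖(g c w).1‖ = (p:ℝ)^t ∧ ‖(g c w).2‖ = (p:ℝ)^(max s (-1) - t) := by
  have hp1 : (1:ℝ) < p := by exact_mod_cast (Fact.out : p.Prime).one_lt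
  have hp0 : (0:ℝ) < p := lt_trans one_pos hp1
  refine ⟨ht, ?_⟩
  have hsub : ‖w.1 - c‖ = (p:ℝ)^(max s (-1)) := by
    rcases lt_or_gt_of_ne hs1 with h | h
    · rw [max_eq_right h.le, ← norm_neg, neg_sub]
      exact norm_sub_max hc hs h
    · rw [max_eq_left h.le]
      exact norm_sub_max hs hc h
  show ‖(w.1 - c) / w.2‖ = _
  rw [norm_div, hsub, ht, ← zpow_sub₀ hp0.ne']

/-- For `c = p` and `(x,y) = (p + 2p³, 2p)`: `(x,y) ∈ Q`, `|x| = |y| = |c| = p⁻¹`,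
the norms of the backward iterates are as stated, and `(x,y) ∈ R \ K⁻`. -/
theorem stmt18 [Fact p.Prime] (hodd : Odd p)
    (c : ℚ_[p]) (hc : c = (p : ℚ_[p]))
    (z : ℚ_[p] × ℚ_[p])
    (hz : z = ((p : ℚ_[p]) + 2 * (p : ℚ_[p]) ^ 3, 2 * (p : ℚ_[p]))) :
    z ∈ QSet c ∧
      (‖z.1‖ = (p : ℝ)⁻¹ ∧ ‖z.2‖ = (p : ℝ)⁻¹ ∧ ‖c‖ = (p : ℝ)⁻¹) ∧
      (∀ n : ℕ, 1 ≤ n →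
        ‖((g c)^[2*n+1] z).1‖ = (p : ℝ) ^ ((2:ℤ) ^ n - 1) ∧
        ‖((g c)^[2*n+1] z).2‖ = (p : ℝ) ^ (-(2:ℤ) ^ n) ∧
        ‖((g c)^[2*n+2] z).1‖ = (p : ℝ) ^ (-(2:ℤ) ^ n) ∧
        ‖((g c)^[2*n+2] z).2‖ = (p : ℝ) ^ ((2:ℤ) ^ (n+1) - 1)) ∧
      Filter.Tendsto (fun n : ℕ => pnorm ((g c)^[n] z)) Filter.atTop Filter.atTop ∧
      z ∈ {w ∈ QSet c | ‖w.1‖ = ‖c‖ ∧ ‖w.2‖ = ‖c‖} \ KMinus c := by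
  have hp : p.Prime := Fact.out
  have hp1 : (1:ℝ) < p := by exact_mod_cast hp.one_lt
  have hp0 : (0:ℝ) < p := lt_trans one_pos hp1
  have hpQ : (p : ℚ_[p]) ≠ 0 := Nat.cast_ne_zero.2 hp.ne_zero
  have h2Q : (2 : ℚ_[p]) ≠ 0 := two_ne_zero
  -- ‖2‖ = 1
  have h2n : ‖(2 : ℚ_[p])‖ = 1 := by
    have h2 : ((2:ℤ) : ℚ_[p]) = 2 := by push_cast; ring
    have hle := Padic.norm_int_le_one (p := p) 2
    have hdvd : ¬ ((p:ℤ) ∣ 2) := by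
      intro h
      have hnd : p ∣ 2 := Int.ofNat_dvd.mp (by exact_mod_cast h)
      have := (Nat.prime_dvd_prime_iff_eq hp Nat.prime_two).mp hnd
      rw [this] at hodd; exact (Nat.not_odd_iff_even.2 even_two) hodd
    rw [← h2]
    rcases lt_or_eq_of_le hle with h | h
    · exact absurd ((Padic.norm_intCast_lt_one_iff (k := 2)).mp h) hdvd
    · exact h
  have hpn : ‖(p : ℚ_[p])‖ = (p:ℝ)^(-1:ℤ) := by
    rw [Padic.norm_p, zpow_neg_one]
  have hcn : ‖c‖ = (p:ℝ)^(-1:ℤ) := by rw [hc, hpn]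
  -- the first three iterates
  have e1 : (g c)^[1] z = (2*(p:ℚ_[p]), (p:ℚ_[p])^2) := by
    rw [hz, hc, Function.iterate_one]
    show ((_ : ℚ_[p]), (_ : ℚ_[p])) = _
    refine Prod.ext rfl ?_
    show ((p : ℚ_[p]) + 2 * (p : ℚ_[p]) ^ 3 - p) / (2 * p) = (p:ℚ_[p])^2
    field_simp; ring
  have e2 : (g c)^[2] z = ((p:ℚ_[p])^2, (p:ℚ_[p])⁻¹) := by
    have : (g c)^[2] z = g c ((g c)^[1] z) :=
      Function.iterate_succ_apply' (g c) 1 z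
    rw [this, e1, hc]
    refine Prod.ext rfl ?_
    show (2 * (p:ℚ_[p]) - p) / (p:ℚ_[p])^2 = (p:ℚ_[p])⁻¹
    field_simp; ring
  have e3 : (g c)^[3] z = ((p:ℚ_[p])⁻¹, (p:ℚ_[p])^3 - (p:ℚ_[p])^2) := by
    have : (g c)^[3] z = g c ((g c)^[2] z) :=
      Function.iterate_succ_apply' (g c) 2 z
    rw [this, e2, hc]
    refine Prod.ext rfl ?_
    show ((p:ℚ_[p])^2 - p) / (p:ℚ_[p])⁻¹ = (p:ℚ_[p])^3 - (p:ℚ_[p])^2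
    field_simp
  have n31 : ‖((g c)^[3] z).1‖ = (p:ℝ)^(1:ℤ) := by
    rw [e3]; show ‖((p:ℚ_[p])⁻¹)‖ = _
    rw [norm_inv, Padic.norm_p, inv_inv, zpow_one]
  have n32 : ‖((g c)^[3] z).2‖ = (p:ℝ)^(-2:ℤ) := by
    rw [e3]
    show ‖(p:ℚ_[p])^3 - (p:ℚ_[p])^2‖ = _
    have ha : ‖(p:ℚ_[p])^3‖ = (p:ℝ)^(-3:ℤ) := by
      rw [norm_pow, Padic.norm_p, ← zpow_neg_one, ← zpow_natCast, ← zpow_mul]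
      norm_num
    have hb : ‖(p:ℚ_[p])^2‖ = (p:ℝ)^(-2:ℤ) := by
      rw [norm_pow, Padic.norm_p, ← zpow_neg_one, ← zpow_natCast, ← zpow_mul]
      norm_num
    rw [← norm_neg, neg_sub]
    exact norm_sub_max hb ha (by norm_num)
  -- the key norm computation
  have key : ∀ n : ℕ, 1 ≤ n →
      ‖((g c)^[2*n+1] z).1‖ = (p : ℝ) ^ ((2:ℤ) ^ n - 1) ∧
      ‖((g c)^[2*n+1] z).2‖ = (p : ℝ) ^ (-(2:ℤ) ^ n) ∧
      ‖((g c)^[2*n+2] z).1‖ = (p : ℝ) ^ (-(2:ℤ) ^ n) ∧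
      ‖((g c)^[2*n+2] z).2‖ = (p : ℝ) ^ ((2:ℤ) ^ (n+1) - 1) := by
    have even_step : ∀ n : ℕ, 1 ≤ n →
        ‖((g c)^[2*n+1] z).1‖ = (p : ℝ) ^ ((2:ℤ) ^ n - 1) →
        ‖((g c)^[2*n+1] z).2‖ = (p : ℝ) ^ (-(2:ℤ) ^ n) →
        ‖((g c)^[2*n+2] z).1‖ = (p : ℝ) ^ (-(2:ℤ) ^ n) ∧
        ‖((g c)^[2*n+2] z).2‖ = (p : ℝ) ^ ((2:ℤ) ^ (n+1) - 1) := by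
      intro n hn h1 h2
      have h2pow : (2:ℤ) ≤ 2^n := by
        calc (2:ℤ) = 2^1 := by norm_num
        _ ≤ 2^n := pow_le_pow_right₀ (by norm_num) hn
      have hiter : (g c)^[2*n+2] z = g c ((g c)^[2*n+1] z) :=
        Function.iterate_succ_apply' (g c) (2*n+1) z
      have hst := gstep (p := p) hcn h1 h2 (by omega)
      rw [hiter]
      refine ⟨hst.1, ?_⟩
      rw [hst.2]
      congr 1
      rw [max_eq_left (by omega), pow_succ]
      ring
    refine Nat.le_induction ?_ ?_
    · refine ⟨?_, ?_, ?_⟩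
      · rw [show 2*1+1 = 3 by norm_num, n31]; norm_num
      · rw [show 2*1+1 = 3 by norm_num, n32]; norm_num
      · exact even_step 1 le_rfl
          (by rw [show 2*1+1 = 3 by norm_num, n31]; norm_num)
          (by rw [show 2*1+1 = 3 by norm_num, n32]; norm_num)
    · intro n hn ih
      obtain ⟨-, -, h3, h4⟩ := ih
      have h2pow : (2:ℤ) ≤ 2^n := by
        calc (2:ℤ) = 2^1 := by norm_num
        _ ≤ 2^n := pow_le_pow_right₀ (by norm_num) hn
      have hiter : (g c)^[2*(n+1)+1] z = g c ((g c)^[2*n+2] z) := by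
        rw [show 2*(n+1)+1 = (2*n+2)+1 by ring]
        exact Function.iterate_succ_apply' (g c) (2*n+2) z
      have hst := gstep (p := p) hcn h3 h4 (by omega)
      have h1' : ‖((g c)^[2*(n+1)+1] z).1‖ = (p : ℝ) ^ ((2:ℤ) ^ (n+1) - 1) := by
        rw [hiter]; exact hst.1
      have h2' : ‖((g c)^[2*(n+1)+1] z).2‖ = (p : ℝ) ^ (-(2:ℤ) ^ (n+1)) := by
        rw [hiter, hst.2]
        congr 1
        rw [max_eq_right (by omega), pow_succ]
        ring
      refine ⟨h1', h2', ?_⟩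
      exact even_step (n+1) (by omega) h1' h2'
  -- membership in QSet
  have hQ : z ∈ QSet c := by
    intro n
    match n with
    | 0 =>
      rw [Function.iterate_zero_apply, hz]
      exact mul_ne_zero h2Q hpQ
    | 1 => rw [e1]; exact pow_ne_zero 2 hpQ
    | 2 => rw [e2]; exact inv_ne_zero hpQ
    | (k+3) =>
      rcases Nat.even_or_odd k with ⟨m, hm⟩ | ⟨m, hm⟩
      · have h := (key (m+1) (by omega)).2.1
        rw [show 2*(m+1)+1 = k+3 by omega] at h
        rw [← norm_ne_zero_iff, h]
        exact (zpow_pos hp0 _).ne'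
      · have h := (key (m+1) (by omega)).2.2.2
        rw [show 2*(m+1)+2 = k+3 by omega] at h
        rw [← norm_ne_zero_iff, h]
        exact (zpow_pos hp0 _).ne'
  -- norms of z itself
  have nz1 : ‖z.1‖ = (p:ℝ)⁻¹ := by
    rw [hz]
    show ‖(p : ℚ_[p]) + 2 * (p : ℚ_[p]) ^ 3‖ = _
    have hb : ‖2 * (p:ℚ_[p])^3‖ = (p:ℝ)^(-3:ℤ) := by
      rw [norm_mul, h2n, one_mul, norm_pow, Padic.norm_p, ← zpow_neg_one,
        ← zpow_natCast, ← zpow_mul]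
      norm_num
    have := norm_sub_max (p := p) hpn (b := -(2 * (p:ℚ_[p])^3))
      (by rw [norm_neg, hb]) (show (-3:ℤ) < -1 by norm_num)
    rw [sub_neg_eq_add] at this
    rw [this, zpow_neg_one]
  have nz2 : ‖z.2‖ = (p:ℝ)⁻¹ := by
    rw [hz]
    show ‖2 * (p : ℚ_[p])‖ = _
    rw [norm_mul, h2n, one_mul, Padic.norm_p]
  have ncn : ‖c‖ = (p:ℝ)⁻¹ := by rw [hc, Padic.norm_p]
  -- growth
  have grow : ∀ k : ℕ, 3 ≤ k → (p:ℝ)^(k/2) ≤ pnorm ((g c)^[k] z) := by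
    intro k hk
    rcases Nat.even_or_odd k with ⟨m, hm⟩ | ⟨m, hm⟩
    · obtain ⟨n, rfl⟩ : ∃ n, m = n + 1 := ⟨m - 1, by omega⟩
      have h := (key n (by omega)).2.2.2
      rw [show 2*n+2 = k by omega] at h
      calc (p:ℝ)^(k/2) = (p:ℝ)^((n+1 : ℕ) : ℤ) := by
            rw [zpow_natCast]; congr 1; omega
        _ ≤ (p:ℝ)^((2:ℤ)^(n+1) - 1) := by
            apply zpow_le_zpow_right₀ hp1.le
            have : ((n:ℤ)+1) < (2:ℤ)^(n+1) := by exact_mod_cast Nat.lt_two_pow_self (n := n+1)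
            push_cast
            omega
        _ = ‖((g c)^[k] z).2‖ := h.symm
        _ ≤ pnorm ((g c)^[k] z) := le_max_right _ _
    · obtain ⟨n, rfl⟩ : ∃ n, m = n + 1 := ⟨m - 1, by omega⟩
      have h := (key (n+1) (by omega)).1
      rw [show 2*(n+1)+1 = k by omega] at h
      calc (p:ℝ)^(k/2) = (p:ℝ)^((n+1 : ℕ) : ℤ) := by
            rw [zpow_natCast]; congr 1; omega
        _ ≤ (p:ℝ)^((2:ℤ)^(n+1) - 1) := by
            apply zpow_le_zpow_right₀ hp1.le
            have : ((n:ℤ)+1) < (2:ℤ)^(n+1) := by exact_mod_cast Nat.lt_two_pow_self (n := n+1)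
            push_cast
            omega
        _ = ‖((g c)^[k] z).1‖ := h.symm
        _ ≤ pnorm ((g c)^[k] z) := le_max_left _ _
  have htend : Filter.Tendsto (fun n : ℕ => pnorm ((g c)^[n] z)) Filter.atTop Filter.atTop := by
    have hdiv : Filter.Tendsto (fun k : ℕ => k / 2) Filter.atTop Filter.atTop :=
      Filter.tendsto_atTop_atTop.2 fun b => ⟨2*b, fun k hk => by omega⟩
    have h1 : Filter.Tendsto (fun k : ℕ => (p:ℝ)^(k/2)) Filter.atTop Filter.atTop :=
      (tendsto_pow_atTop_atTop_of_one_lt hp1).comp hdiv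
    refine Filter.tendsto_atTop_mono' Filter.atTop ?_ h1
    filter_upwards [Filter.eventually_ge_atTop 3] with k hk using grow k hk
  have hnK : z ∉ KMinus c := by
    rintro ⟨-, M, hM⟩
    obtain ⟨k, hk⟩ := (htend.eventually_gt_atTop M).exists
    exact absurd (hM k) (not_le.2 hk)
  exact ⟨hQ, ⟨nz1, nz2, ncn⟩, key, htend,
    ⟨⟨hQ, by rw [nz1, ncn], by rw [nz2, ncn]⟩, hnK⟩⟩
end

section
/- Let c = 1 and (x,y) = (-1, -p). Then (x,y) ∈ Q (i.e., all backward iterates gⁿ(x,y) are defined), max(|x|, |y|) = 1, and writing (x_{-n}, y_{-n}) = gⁿ(x,y), one has (|x_{-1}|, |y_{-1}|) = (p^{-1}, p) and for every n ≥ 1, (|x_{-2n}|, |y_{-2n}|) = (p^{2^{n-1}}, p^{-2^{n-1}}) and (|x_{-2n-1}|, |y_{-2n-1}|) = (p^{-2^{n-1}}, p^{2ⁿ}). In particular ‖gⁿ(x,y)‖ → +∞ as n → +∞, so (x,y) ∉ K⁻. -/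
variable {p : ℕ}

section Aux

variable [Fact p.Prime]

lemma aux_norm_sub_one_of_lt {a : ℚ_[p]} (h : ‖a‖ < 1) : ‖a - 1‖ = 1 := by
  have h1 : ‖(-1 : ℚ_[p])‖ = 1 := by simp
  rw [sub_eq_add_neg, Padic.add_eq_max_of_ne (by rw [h1]; exact h.ne), h1,
    max_eq_right h.le]

lemma aux_norm_sub_one_of_gt {a : ℚ_[p]} (h : 1 < ‖a‖) : ‖a - 1‖ = ‖a‖ := by
  have h1 : ‖(-1 : ℚ_[p])‖ = 1 := by simp
  rw [sub_eq_add_neg, Padic.add_eq_max_of_ne (by rw [h1]; exact h.ne'), h1,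
    max_eq_left h.le]

lemma aux_g_fst (c : ℚ_[p]) (w : ℚ_[p] × ℚ_[p]) : (g c w).1 = w.2 := rfl

lemma aux_g_snd (c : ℚ_[p]) (w : ℚ_[p] × ℚ_[p]) : (g c w).2 = (w.1 - c) / w.2 := rfl

end Aux

/-- For `c = 1` and `(x,y) = (-1, -p)`: `(x,y) ∈ Q`, `max(|x|,|y|) = 1`, the norms of
the backward iterates are as stated, and `(x,y) ∉ K⁻`. -/
theorem stmt19 [Fact p.Prime] (hodd : Odd p)
    (c : ℚ_[p]) (hc : c = 1)
    (z : ℚ_[p] × ℚ_[p]) (hz : z = (-1, -(p : ℚ_[p]))) :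
    z ∈ QSet c ∧
      max ‖z.1‖ ‖z.2‖ = 1 ∧
      (‖((g c)^[1] z).1‖ = (p : ℝ)⁻¹ ∧ ‖((g c)^[1] z).2‖ = (p : ℝ)) ∧
      (∀ n : ℕ, 1 ≤ n →
        ‖((g c)^[2*n] z).1‖ = (p : ℝ) ^ ((2:ℤ) ^ (n-1)) ∧
        ‖((g c)^[2*n] z).2‖ = (p : ℝ) ^ (-(2:ℤ) ^ (n-1)) ∧
        ‖((g c)^[2*n+1] z).1‖ = (p : ℝ) ^ (-(2:ℤ) ^ (n-1)) ∧
        ‖((g c)^[2*n+1] z).2‖ = (p : ℝ) ^ ((2:ℤ) ^ n)) ∧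
      Filter.Tendsto (fun n : ℕ => pnorm ((g c)^[n] z)) Filter.atTop Filter.atTop ∧
      z ∉ KMinus c := by
  subst hc hz
  have hp : p.Prime := Fact.out
  have hpR : 1 < (p : ℝ) := by exact_mod_cast hp.one_lt
  have hpR0 : (0 : ℝ) < p := lt_trans one_pos hpR
  have hpRne : (p : ℝ) ≠ 0 := hpR0.ne'
  have hp2 : p ≠ 2 := by
    rintro rfl
    exact (Nat.not_odd_iff_even.mpr even_two) hodd
  -- norm of 2
  have h2 : ‖(2 : ℚ_[p])‖ = 1 := by
    have hdvd : ¬ ((p : ℤ) ∣ (2 : ℤ)) := by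
      intro h
      have : p ∣ 2 := by exact_mod_cast h
      exact hp2 ((Nat.prime_dvd_prime_iff_eq hp Nat.prime_two).mp this)
    have h1 : ‖((2 : ℤ) : ℚ_[p])‖ ≤ 1 := Padic.norm_int_le_one 2
    have h2' : ¬ ‖((2 : ℤ) : ℚ_[p])‖ < 1 := by
      rw [Padic.norm_intCast_lt_one_iff]; exact hdvd
    have : ‖((2 : ℤ) : ℚ_[p])‖ = 1 := le_antisymm h1 (not_lt.mp h2')
    simpa using this
  set z0 : ℚ_[p] × ℚ_[p] := (-1, -(p : ℚ_[p])) with hz0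
  have h0x : ‖z0.1‖ = 1 := by simp [hz0]
  have h0y : ‖z0.2‖ = (p : ℝ)⁻¹ := by simp [hz0, Padic.norm_p]
  have hnorm_g : ∀ w : ℚ_[p] × ℚ_[p],
      ‖(g 1 w).1‖ = ‖w.2‖ ∧ ‖(g 1 w).2‖ = ‖w.1 - 1‖ / ‖w.2‖ := by
    intro w
    exact ⟨rfl, by rw [aux_g_snd, norm_div]⟩
  have hinv_lt : (p : ℝ)⁻¹ < 1 := inv_lt_one_of_one_lt₀ hpR
  -- iterate 1
  have it1 : (g 1)^[1] z0 = g 1 z0 := by rw [Function.iterate_one]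
  have h1x : ‖((g 1)^[1] z0).1‖ = (p : ℝ)⁻¹ := by
    rw [it1, (hnorm_g z0).1, h0y]
  have h1y : ‖((g 1)^[1] z0).2‖ = (p : ℝ) := by
    have hs : ‖z0.1 - 1‖ = 1 := by
      have : z0.1 - 1 = -2 := by simp [hz0]; ring
      rw [this, norm_neg, h2]
    rw [it1, (hnorm_g z0).2, hs, h0y, one_div, inv_inv]
  -- iterate 2
  have it2 : (g 1)^[2] z0 = g 1 ((g 1)^[1] z0) := by
    rw [show (2 : ℕ) = 1 + 1 by norm_num, Function.iterate_succ_apply']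
  have h2x : ‖((g 1)^[2] z0).1‖ = (p : ℝ) := by
    rw [it2, (hnorm_g _).1, h1y]
  have h2y : ‖((g 1)^[2] z0).2‖ = (p : ℝ)⁻¹ := by
    have hs : ‖((g 1)^[1] z0).1 - 1‖ = 1 := aux_norm_sub_one_of_lt (by rw [h1x]; exact hinv_lt)
    rw [it2, (hnorm_g _).2, hs, h1y, one_div]
  -- iterate 3
  have it3 : (g 1)^[3] z0 = g 1 ((g 1)^[2] z0) := by
    rw [show (3 : ℕ) = 2 + 1 by norm_num, Function.iterate_succ_apply']
  have h3x : ‖((g 1)^[3] z0).1‖ = (p : ℝ)⁻¹ := by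
    rw [it3, (hnorm_g _).1, h2y]
  have h3y : ‖((g 1)^[3] z0).2‖ = (p : ℝ) ^ (2 : ℤ) := by
    have hs : ‖((g 1)^[2] z0).1 - 1‖ = (p : ℝ) := by
      rw [aux_norm_sub_one_of_gt (by rw [h2x]; exact hpR), h2x]
    rw [it3, (hnorm_g _).2, hs, h2y, zpow_two]
    field_simp
  -- the key induction
  have key : ∀ n : ℕ, 1 ≤ n →
      ‖((g 1)^[2*n] z0).1‖ = (p : ℝ) ^ ((2:ℤ) ^ (n-1)) ∧
      ‖((g 1)^[2*n] z0).2‖ = (p : ℝ) ^ (-(2:ℤ) ^ (n-1)) ∧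
      ‖((g 1)^[2*n+1] z0).1‖ = (p : ℝ) ^ (-(2:ℤ) ^ (n-1)) ∧
      ‖((g 1)^[2*n+1] z0).2‖ = (p : ℝ) ^ ((2:ℤ) ^ n) := by
    intro n hn
    induction n, hn using Nat.le_induction with
    | base =>
      refine ⟨?_, ?_, ?_, ?_⟩
      · simpa using h2x
      · simpa using h2y
      · simpa using h3x
      · simpa using h3y
    | succ n hn ih =>
      obtain ⟨ih1, ih2, ih3, ih4⟩ := ih
      have hpow_pos : (0 : ℤ) < (2:ℤ) ^ (n-1) := by positivity
      have hpow_pos' : (0 : ℤ) < (2:ℤ) ^ n := by positivity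
      have itA : (g 1)^[2*(n+1)] z0 = g 1 ((g 1)^[2*n+1] z0) := by
        rw [show 2*(n+1) = (2*n+1) + 1 by ring, Function.iterate_succ_apply']
      have itB : (g 1)^[2*(n+1)+1] z0 = g 1 ((g 1)^[2*(n+1)] z0) := by
        rw [Function.iterate_succ_apply']
      have hn1 : n + 1 - 1 = n := rfl
      have hAx : ‖((g 1)^[2*(n+1)] z0).1‖ = (p : ℝ) ^ ((2:ℤ) ^ n) := by
        rw [itA, (hnorm_g _).1, ih4]
      have hAy : ‖((g 1)^[2*(n+1)] z0).2‖ = (p : ℝ) ^ (-(2:ℤ) ^ n) := by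
        have hlt : ‖((g 1)^[2*n+1] z0).1‖ < 1 := by
          rw [ih3, zpow_neg]
          exact inv_lt_one_of_one_lt₀ (one_lt_zpow₀ hpR hpow_pos)
        have hs := aux_norm_sub_one_of_lt hlt
        rw [itA, (hnorm_g _).2, hs, ih4, one_div, ← zpow_neg]
      have hBx : ‖((g 1)^[2*(n+1)+1] z0).1‖ = (p : ℝ) ^ (-(2:ℤ) ^ n) := by
        rw [itB, (hnorm_g _).1, hAy]
      have hBy : ‖((g 1)^[2*(n+1)+1] z0).2‖ = (p : ℝ) ^ ((2:ℤ) ^ (n+1)) := by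
        have hgt : 1 < ‖((g 1)^[2*(n+1)] z0).1‖ := by
          rw [hAx]; exact one_lt_zpow₀ hpR hpow_pos'
        have hs := aux_norm_sub_one_of_gt hgt
        rw [itB, (hnorm_g _).2, hs, hAx, hAy, ← zpow_sub₀ hpRne]
        congr 1
        ring
      rw [hn1]
      exact ⟨hAx, hAy, hBx, hBy⟩
  -- membership in Q
  have hQ : z0 ∈ QSet (1 : ℚ_[p]) := by
    intro n
    rw [← norm_ne_zero_iff]
    rcases Nat.even_or_odd n with ⟨m, hm⟩ | ⟨m, hm⟩
    · rcases Nat.eq_zero_or_pos m with rfl | hm1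
      · have h00 : (g 1)^[n] z0 = z0 := by rw [hm]; rfl
        rw [h00, h0y]
        exact inv_ne_zero hpRne
      · have hk := (key m hm1).2.1
        rw [show 2*m = m + m by ring, ← hm] at hk
        rw [hk]
        exact zpow_ne_zero _ hpRne
    · rcases Nat.eq_zero_or_pos m with rfl | hm1
      · have h00 : n = 1 := by omega
        rw [h00, h1y]
        exact hpRne
      · have hk := (key m hm1).2.2.2
        rw [← hm] at hk
        rw [hk]
        exact zpow_ne_zero _ hpRne
  -- lower bound for pnorm
  have hlb : ∀ n : ℕ, 2 ≤ n → (p : ℝ) ^ (n / 2) ≤ pnorm ((g 1)^[n] z0) := by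
    intro n hn
    rcases Nat.even_or_odd n with ⟨m, hm⟩ | ⟨m, hm⟩
    · have hm1 : 1 ≤ m := by omega
      have hx := (key m hm1).1
      have hd : n / 2 = m := by omega
      rw [show 2*m = m + m by ring, ← hm] at hx
      have hexp : ((n / 2 : ℕ) : ℤ) ≤ (2:ℤ) ^ (m - 1) := by
        rw [hd]
        have h2 : m ≤ 2 ^ (m - 1) := by
          have h3 : m - 1 < 2 ^ (m - 1) := Nat.lt_two_pow_self
          omega
        exact_mod_cast h2
      calc (p : ℝ) ^ (n / 2) = (p : ℝ) ^ ((n / 2 : ℕ) : ℤ) := by rw [zpow_natCast]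
        _ ≤ (p : ℝ) ^ ((2:ℤ) ^ (m-1)) := zpow_le_zpow_right₀ hpR.le hexp
        _ = ‖((g 1)^[n] z0).1‖ := hx.symm
        _ ≤ pnorm ((g 1)^[n] z0) := le_max_left _ _
    · have hm1 : 1 ≤ m := by omega
      have hy := (key m hm1).2.2.2
      have hd : n / 2 = m := by omega
      rw [← hm] at hy
      have hexp : ((n / 2 : ℕ) : ℤ) ≤ (2:ℤ) ^ m := by
        rw [hd]
        have h2 : m ≤ 2 ^ m := (Nat.lt_two_pow_self (n := m)).le
        exact_mod_cast h2
      calc (p : ℝ) ^ (n / 2) = (p : ℝ) ^ ((n / 2 : ℕ) : ℤ) := by rw [zpow_natCast]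
        _ ≤ (p : ℝ) ^ ((2:ℤ) ^ m) := zpow_le_zpow_right₀ hpR.le hexp
        _ = ‖((g 1)^[n] z0).2‖ := hy.symm
        _ ≤ pnorm ((g 1)^[n] z0) := le_max_right _ _
  -- tendsto
  have htend : Filter.Tendsto (fun n : ℕ => pnorm ((g 1)^[n] z0)) Filter.atTop Filter.atTop := by
    have hdiv : Filter.Tendsto (fun n : ℕ => n / 2) Filter.atTop Filter.atTop := by
      rw [Filter.tendsto_atTop]
      intro b
      rw [Filter.eventually_atTop]
      exact ⟨2 * b, fun n hn => by omega⟩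
    have hpow : Filter.Tendsto (fun n : ℕ => (p : ℝ) ^ n) Filter.atTop Filter.atTop :=
      tendsto_pow_atTop_atTop_of_one_lt hpR
    have hcomp := hpow.comp hdiv
    refine Filter.tendsto_atTop_mono' _ ?_ hcomp
    filter_upwards [Filter.eventually_ge_atTop 2] with n hn
    exact hlb n hn
  refine ⟨hQ, ?_, ⟨h1x, h1y⟩, key, htend, ?_⟩
  · rw [h0x, h0y]
    exact max_eq_left hinv_lt.le
  · rintro ⟨-, M, hM⟩
    obtain ⟨n, hn⟩ := (htend.eventually_gt_atTop M).exists
    exact absurd (hM n) (not_le.mpr hn)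
end
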